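/- Let d ≥ 1, let λ ≥ 2 be a real number, and let b : Fin (d+1) → ℕ be any map. Let A be the (d+1)×(d+1) real matrix with A i i = 0, A i j = 1 for i ≠ j with b i = b j, and A i j = λ² for b i ≠ b j, and let Ā be the (d+2)×(d+2) matrix obtained by bordering A with a new first row and first column both equal to (0, 1, 1, …, 1). Then (−1)^{d+1} · det Ā > 0. -/

import Mathlib

open Matrix Finset

noncomputable def Gm (d : ℕ) (lam : ℝ) (b : Fin (d + 1) → ℕ) :
    Matrix (Fin (d + 1)) (Fin (d + 1)) ℝ :=
  fun i j => (1 / 2) * (if i = j then 1 else 0)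
    + ((lam ^ 2 - 1) / 2) * (if b i = b j then 1 else 0)

noncomputable def Hm (d : ℕ) (lam : ℝ) (b : Fin (d + 1) → ℕ) : Matrix (Fin d) (Fin d) ℝ :=
  fun i j => Gm d lam b i.succ j.succ - Gm d lam b 0 j.succ - Gm d lam b i.succ 0
    + Gm d lam b 0 0

section Bmats
variable (d : ℕ) (lam : ℝ) (b : Fin (d + 1) → ℕ)

noncomputable def B1 : Matrix (Fin 2 ⊕ Fin d) (Fin 2 ⊕ Fin d) ℝ :=
  Matrix.fromBlocks !![0, 1; 1, -(Gm d lam b 0 0)]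
    (fun a j => if a = 0 then 1 else Gm d lam b j.succ j.succ - 2 * Gm d lam b 0 j.succ)
    (fun i c => if c = 0 then 1 else Gm d lam b 0 0 - 2 * Gm d lam b i.succ 0)
    (fun i j => Gm d lam b j.succ j.succ - 2 * Gm d lam b i.succ j.succ)

noncomputable def B2 : Matrix (Fin 2 ⊕ Fin d) (Fin 2 ⊕ Fin d) ℝ :=
  Matrix.fromBlocks !![0, 1; 1, -2 * Gm d lam b 0 0]
    (fun a j => if a = 0 then 1 else -2 * Gm d lam b 0 j.succ)
    (fun i c => if c = 0 then 1 else -2 * Gm d lam b i.succ 0)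
    (fun i j => -2 * Gm d lam b i.succ j.succ)

noncomputable def B3 : Matrix (Fin 2 ⊕ Fin d) (Fin 2 ⊕ Fin d) ℝ :=
  Matrix.fromBlocks !![0, 1; 1, -2 * Gm d lam b 0 0]
    (fun a j => if a = 0 then 1 else -2 * Gm d lam b 0 j.succ)
    (fun i c => if c = 0 then 0 else -2 * Gm d lam b i.succ 0 + 2 * Gm d lam b 0 0)
    (fun i j => -2 * Gm d lam b i.succ j.succ + 2 * Gm d lam b 0 j.succ)

noncomputable def B4 : Matrix (Fin 2 ⊕ Fin d) (Fin 2 ⊕ Fin d) ℝ :=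
  Matrix.fromBlocks !![0, 1; 1, -2 * Gm d lam b 0 0]
    (fun a j => if a = 0 then 0 else -2 * Gm d lam b 0 j.succ + 2 * Gm d lam b 0 0)
    (fun i c => if c = 0 then 0 else -2 * Gm d lam b i.succ 0 + 2 * Gm d lam b 0 0)
    ((-2 : ℝ) • Hm d lam b)

noncomputable def B5 : Matrix (Fin 2 ⊕ Fin d) (Fin 2 ⊕ Fin d) ℝ :=
  Matrix.fromBlocks !![0, 1; 1, 0]
    (fun a j => if a = 0 then 0 else -2 * Gm d lam b 0 j.succ + 2 * Gm d lam b 0 0)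
    0
    ((-2 : ℝ) • Hm d lam b)

noncomputable def B6 : Matrix (Fin 2 ⊕ Fin d) (Fin 2 ⊕ Fin d) ℝ :=
  Matrix.fromBlocks !![0, 1; 1, 0] 0 0 ((-2 : ℝ) • Hm d lam b)

end Bmats

def eIdx (d : ℕ) : Fin 2 ⊕ Fin d ≃ Fin (d + 2) :=
  finSumFinEquiv.trans (finCongr (by omega))

lemma eIdx_inl0 (d : ℕ) : eIdx d (Sum.inl 0) = 0 := by
  apply Fin.ext; simp [eIdx]

lemma eIdx_inl1 (d : ℕ) : eIdx d (Sum.inl 1) = (0 : Fin (d + 1)).succ := by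
  apply Fin.ext; simp [eIdx]

lemma eIdx_inr (d : ℕ) (i : Fin d) : eIdx d (Sum.inr i) = (i.succ).succ := by
  apply Fin.ext; simp [eIdx]

lemma Gm_symm (lam : ℝ) (b : Fin (d + 1) → ℕ) (i j : Fin (d + 1)) :
    Gm d lam b i j = Gm d lam b j i := by
  unfold Gm
  rw [show (if i = j then (1:ℝ) else 0) = if j = i then 1 else 0 from if_congr eq_comm rfl rfl,
    show (if b i = b j then (1:ℝ) else 0) = if b j = b i then 1 else 0 from
      if_congr eq_comm rfl rfl]

lemma chi_sum (V : Finset ℕ) (a1 a2 : ℕ) (h : a1 ∈ V) :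
    (∑ s ∈ V, (if a1 = s then (1 : ℝ) else 0) * (if a2 = s then 1 else 0))
      = if a2 = a1 then 1 else 0 := by
  have : ∀ s, (if a1 = s then (1 : ℝ) else 0) * (if a2 = s then 1 else 0)
      = if a1 = s then (if a2 = s then (1 : ℝ) else 0) else 0 := by
    intro s; by_cases h1 : a1 = s <;> simp [h1]
  rw [Finset.sum_congr rfl fun s _ => this s, Finset.sum_ite_eq, if_pos h]

lemma Hm_posDef (lam : ℝ) (hlam : 2 ≤ lam) (b : Fin (d + 1) → ℕ) :
    (Hm d lam b).PosDef := by
  have hmu : (0 : ℝ) ≤ (lam ^ 2 - 1) / 2 := by nlinarith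
  set μ := (lam ^ 2 - 1) / 2 with hμ
  set V : Finset ℕ := Finset.image b Finset.univ with hV
  have hbV : ∀ i : Fin (d + 1), b i ∈ V := fun i =>
    Finset.mem_image.mpr ⟨i, Finset.mem_univ i, rfl⟩
  -- the indicator-difference vectors
  set u : Fin d → ℕ → ℝ := fun i s =>
    (if b i.succ = s then 1 else 0) - (if b 0 = s then 1 else 0) with hu
  have hK : ∀ i j : Fin d, (∑ s ∈ V, u i s * u j s) =
      (if b i.succ = b j.succ then 1 else 0) - (if b 0 = b j.succ then 1 else 0)
        - (if b i.succ = b 0 then 1 else 0) + 1 := by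
    intro i j
    have expand : ∀ s, u i s * u j s =
        (if b i.succ = s then (1:ℝ) else 0) * (if b j.succ = s then 1 else 0)
        - (if b 0 = s then (1:ℝ) else 0) * (if b j.succ = s then 1 else 0)
        - (if b i.succ = s then (1:ℝ) else 0) * (if b 0 = s then 1 else 0)
        + (if b 0 = s then (1:ℝ) else 0) * (if b 0 = s then 1 else 0) := by
      intro s; simp only [hu]; ring
    rw [Finset.sum_congr rfl fun s _ => expand s]
    rw [Finset.sum_add_distrib, Finset.sum_sub_distrib, Finset.sum_sub_distrib]
    rw [chi_sum V _ _ (hbV i.succ), chi_sum V _ _ (hbV 0), chi_sum V _ _ (hbV i.succ),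
      chi_sum V _ _ (hbV 0)]
    have e1 : (if b j.succ = b i.succ then (1:ℝ) else 0) = if b i.succ = b j.succ then 1 else 0 :=
      if_congr eq_comm rfl rfl
    have e2 : (if b j.succ = b 0 then (1:ℝ) else 0) = if b 0 = b j.succ then 1 else 0 :=
      if_congr eq_comm rfl rfl
    have e3 : (if b 0 = b i.succ then (1:ℝ) else 0) = if b i.succ = b 0 then 1 else 0 :=
      if_congr eq_comm rfl rfl
    rw [e1, e2, e3]
    simp
  have hHexp : ∀ i j : Fin d, Hm d lam b i j =
      (1/2) * (if i = j then 1 else 0) + (1/2)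
        + μ * ((if b i.succ = b j.succ then 1 else 0) - (if b 0 = b j.succ then 1 else 0)
          - (if b i.succ = b 0 then 1 else 0) + 1) := by
    intro i j
    have hsucc : (i.succ = j.succ) = (i = j) := by
      simp [Fin.succ_inj]
    have h0 : ((0 : Fin (d+1)) = j.succ) = False := by
      simp [(Fin.succ_ne_zero j).symm]
    have h0' : (i.succ = (0 : Fin (d+1))) = False := by
      simp [Fin.succ_ne_zero i]
    unfold Hm Gm
    rw [if_pos (rfl : (0:Fin (d+1)) = 0), if_pos (rfl : b 0 = b 0),
      if_neg (Fin.succ_ne_zero i),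
      if_neg (show ¬((0 : Fin (d+1)) = j.succ) from fun h => (Fin.succ_ne_zero j) h.symm),
      show (if i.succ = j.succ then (1:ℝ) else 0) = if i = j then 1 else 0 from
        if_congr Fin.succ_inj rfl rfl]
    rw [hμ]; ring
  rw [Matrix.posDef_iff_dotProduct_mulVec]
  constructor
  · -- Hermitian
    ext i j
    simp only [Matrix.conjTranspose_apply, star_trivial]
    show Hm d lam b j i = Hm d lam b i j
    unfold Hm
    rw [Gm_symm lam b j.succ i.succ, Gm_symm lam b 0 i.succ, Gm_symm lam b j.succ 0]
    ring
  · intro x hx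
    have hstar : star x = x := funext fun i => rfl
    rw [hstar]
    set w : ℕ → ℝ := fun s => ∑ i, x i * u i s with hw
    have key : dotProduct x ((Hm d lam b) *ᵥ x) =
        (1/2) * (∑ i, x i ^ 2) + (1/2) * (∑ i, x i) ^ 2 + μ * ∑ s ∈ V, w s ^ 2 := by
      have step1 : dotProduct x ((Hm d lam b) *ᵥ x) =
          ∑ i, ∑ j, x i * x j * Hm d lam b i j := by
        simp only [dotProduct, Matrix.mulVec, dotProduct, Finset.mul_sum]
        exact Finset.sum_congr rfl fun i _ => Finset.sum_congr rfl fun j _ => by ring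
      rw [step1]
      have step2 : ∀ i j : Fin d, x i * x j * Hm d lam b i j =
          (1/2) * (if i = j then x i * x j else 0) + (1/2) * (x i * x j)
            + μ * (x i * x j * ((if b i.succ = b j.succ then 1 else 0)
              - (if b 0 = b j.succ then 1 else 0)
              - (if b i.succ = b 0 then 1 else 0) + 1)) := by
        intro i j
        rw [hHexp i j]
        by_cases hij : i = j <;> simp [hij] <;> try ring
      rw [Finset.sum_congr rfl fun i _ => Finset.sum_congr rfl fun j _ => step2 i j]
      have split : ∀ i : Fin d, ∑ j, ((1/2) * (if i = j then x i * x j else 0)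
            + (1/2) * (x i * x j)
            + μ * (x i * x j * ((if b i.succ = b j.succ then 1 else 0)
              - (if b 0 = b j.succ then 1 else 0)
              - (if b i.succ = b 0 then 1 else 0) + 1)))
          = (∑ j, (1/2) * (if i = j then x i * x j else 0))
            + (∑ j, (1/2) * (x i * x j))
            + ∑ j, μ * (x i * x j * ((if b i.succ = b j.succ then 1 else 0)
              - (if b 0 = b j.succ then 1 else 0)
              - (if b i.succ = b 0 then 1 else 0) + 1)) := by
        intro i
        rw [← Finset.sum_add_distrib, ← Finset.sum_add_distrib]
      rw [Finset.sum_congr rfl fun i _ => split i]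
      rw [Finset.sum_add_distrib, Finset.sum_add_distrib]
      have t1 : (∑ i : Fin d, ∑ j, (1/2) * (if i = j then x i * x j else 0))
          = (1/2) * ∑ i, x i ^ 2 := by
        rw [Finset.mul_sum]
        refine Finset.sum_congr rfl fun i _ => ?_
        rw [← Finset.mul_sum, Finset.sum_ite_eq, if_pos (Finset.mem_univ i), sq]
      have t2 : (∑ i : Fin d, ∑ j, (1/2) * (x i * x j)) = (1/2) * (∑ i, x i) ^ 2 := by
        rw [sq, Finset.sum_mul_sum, Finset.mul_sum]
        refine Finset.sum_congr rfl fun i _ => ?_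
        rw [Finset.mul_sum]
      have t3' : (∑ s ∈ V, w s ^ 2)
          = ∑ i : Fin d, ∑ j, (x i * x j * ((if b i.succ = b j.succ then 1 else 0)
              - (if b 0 = b j.succ then 1 else 0)
              - (if b i.succ = b 0 then 1 else 0) + 1)) := by
        have hws : ∀ s, w s ^ 2 = ∑ i, ∑ j, (x i * u i s) * (x j * u j s) := by
          intro s
          rw [sq, hw, Finset.sum_mul_sum]
        rw [Finset.sum_congr rfl fun s _ => hws s, Finset.sum_comm]
        refine Finset.sum_congr rfl fun i _ => ?_
        rw [Finset.sum_comm]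
        refine Finset.sum_congr rfl fun j _ => ?_
        have hpt : (∑ s ∈ V, (x i * u i s) * (x j * u j s))
            = x i * x j * ∑ s ∈ V, u i s * u j s := by
          rw [Finset.mul_sum]
          exact Finset.sum_congr rfl fun s _ => by ring
        rw [hpt, hK i j]
      have t3 : (∑ i : Fin d, ∑ j, μ * (x i * x j * ((if b i.succ = b j.succ then 1 else 0)
              - (if b 0 = b j.succ then 1 else 0)
              - (if b i.succ = b 0 then 1 else 0) + 1)))
          = μ * ∑ s ∈ V, w s ^ 2 := by
        have pull : μ * (∑ i : Fin d, ∑ j, (x i * x j * ((if b i.succ = b j.succ then 1 else 0)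
              - (if b 0 = b j.succ then 1 else 0)
              - (if b i.succ = b 0 then 1 else 0) + 1)))
            = ∑ i : Fin d, ∑ j, μ * (x i * x j * ((if b i.succ = b j.succ then 1 else 0)
              - (if b 0 = b j.succ then 1 else 0)
              - (if b i.succ = b 0 then 1 else 0) + 1)) := by
          rw [Finset.mul_sum]
          exact Finset.sum_congr rfl fun i _ => Finset.mul_sum _ _ _
        rw [← pull, t3']
      rw [t1, t2, t3]
    rw [key]
    obtain ⟨i, hi⟩ : ∃ i, x i ≠ 0 := Function.ne_iff.mp hx
    have h1 : 0 < ∑ i, x i ^ 2 :=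
      Finset.sum_pos' (fun i _ => sq_nonneg _)
        ⟨i, Finset.mem_univ i, lt_of_le_of_ne (sq_nonneg _) (Ne.symm (pow_ne_zero 2 hi))⟩
    have h2 : (0:ℝ) ≤ (∑ i, x i) ^ 2 := sq_nonneg _
    have h3 : (0:ℝ) ≤ μ * ∑ s ∈ V, w s ^ 2 :=
      mul_nonneg hmu (Finset.sum_nonneg fun s _ => sq_nonneg _)
    linarith


set_option maxHeartbeats 1600000 in
theorem stmt_5 (d : ℕ) (hd : 1 ≤ d) (lam : ℝ) (hlam : 2 ≤ lam)
    (b : Fin (d + 1) → ℕ)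
    (A : Matrix (Fin (d + 1)) (Fin (d + 1)) ℝ)
    (hA : ∀ i j, A i j = if i = j then 0 else if b i = b j then 1 else lam ^ 2)
    (Abar : Matrix (Fin (d + 2)) (Fin (d + 2)) ℝ)
    (hbar00 : Abar 0 0 = 0)
    (hbar0row : ∀ j : Fin (d + 1), Abar 0 j.succ = 1)
    (hbar0col : ∀ i : Fin (d + 1), Abar i.succ 0 = 1)
    (hbarA : ∀ i j : Fin (d + 1), Abar i.succ j.succ = A i j) :
    (-1 : ℝ) ^ (d + 1) * Abar.det > 0 := by
  -- abbreviation
  set G := Gm d lam b with hG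
  have hAG : ∀ i j, A i j = G i i + G j j - 2 * G i j := by
    intro i j
    rw [hA, hG]
    unfold Gm
    by_cases h1 : i = j
    · subst h1; simp; ring
    · by_cases h2 : b i = b j
      · simp [h1, h2]; ring
      · simp [h1, h2]; ring
  set M0 : Matrix (Fin 2 ⊕ Fin d) (Fin 2 ⊕ Fin d) ℝ :=
    Abar.submatrix (eIdx d) (eIdx d) with hM0
  have hdet0 : M0.det = Abar.det := Matrix.det_submatrix_equiv_self (eIdx d) Abar
  -- entries of M0
  have hm00 : M0 (Sum.inl 0) (Sum.inl 0) = 0 := by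
    rw [hM0]; simp only [Matrix.submatrix_apply, eIdx_inl0]; exact hbar00
  have hm01 : M0 (Sum.inl 0) (Sum.inl 1) = 1 := by
    rw [hM0]; simp only [Matrix.submatrix_apply, eIdx_inl0, eIdx_inl1]; exact hbar0row 0
  have hm0r : ∀ j, M0 (Sum.inl 0) (Sum.inr j) = 1 := by
    intro j
    rw [hM0]; simp only [Matrix.submatrix_apply, eIdx_inl0, eIdx_inr]; exact hbar0row _
  have hm10 : M0 (Sum.inl 1) (Sum.inl 0) = 1 := by
    rw [hM0]; simp only [Matrix.submatrix_apply, eIdx_inl0, eIdx_inl1]; exact hbar0col 0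
  have hmr0 : ∀ i, M0 (Sum.inr i) (Sum.inl 0) = 1 := by
    intro i
    rw [hM0]; simp only [Matrix.submatrix_apply, eIdx_inl0, eIdx_inr]; exact hbar0col _
  have hm11 : M0 (Sum.inl 1) (Sum.inl 1) = G 0 0 + G 0 0 - 2 * G 0 0 := by
    rw [hM0]; simp only [Matrix.submatrix_apply, eIdx_inl1]
    rw [hbarA, hAG]
  have hm1r : ∀ j, M0 (Sum.inl 1) (Sum.inr j) = G 0 0 + G j.succ j.succ - 2 * G 0 j.succ := by
    intro j
    rw [hM0]; simp only [Matrix.submatrix_apply, eIdx_inl1, eIdx_inr]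
    rw [hbarA, hAG]
  have hmr1 : ∀ i, M0 (Sum.inr i) (Sum.inl 1) = G i.succ i.succ + G 0 0 - 2 * G i.succ 0 := by
    intro i
    rw [hM0]; simp only [Matrix.submatrix_apply, eIdx_inl1, eIdx_inr]
    rw [hbarA, hAG]
  have hmrr : ∀ i j, M0 (Sum.inr i) (Sum.inr j)
      = G i.succ i.succ + G j.succ j.succ - 2 * G i.succ j.succ := by
    intro i j
    rw [hM0]; simp only [Matrix.submatrix_apply, eIdx_inr]
    rw [hbarA, hAG]
  -- step 1 : row operations with pivot (inl 0)
  have s1 : (B1 d lam b).det = M0.det := by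
    refine Matrix.det_eq_of_forall_row_eq_smul_add_const
      (Sum.elim ![0, -(G 0 0)] (fun i => -(G i.succ i.succ))) (Sum.inl 0) (by simp) ?_
    rintro (a | i) (c | j)
    · fin_cases a <;> fin_cases c <;>
        simp [Matrix.fromBlocks, B1, hm00, hm01, hm10, hm11, hG] <;> try ring
    · fin_cases a <;>
        simp [Matrix.fromBlocks, B1, hm0r, hm00, hm1r, hG] <;> try ring
    · fin_cases c <;>
        simp [Matrix.fromBlocks, B1, hmr0, hmr1, hm00, hm01, hG] <;> try ring
    · simp [Matrix.fromBlocks, B1, hmrr, hm0r, hG]; try ring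
  -- step 2 : column operations with pivot (inl 0)
  have s2 : (B2 d lam b).det = (B1 d lam b).det := by
    rw [← Matrix.det_transpose (B2 d lam b), ← Matrix.det_transpose (B1 d lam b)]
    refine Matrix.det_eq_of_forall_row_eq_smul_add_const
      (Sum.elim ![0, -(G 0 0)] (fun j => -(G j.succ j.succ))) (Sum.inl 0) (by simp) ?_
    rintro (a | i) (c | j)
    · fin_cases a <;> fin_cases c <;>
        simp [Matrix.fromBlocks, B1, B2, Matrix.transpose_apply, hG] <;> try ring
    · fin_cases a <;>
        simp [Matrix.fromBlocks, B1, B2, Matrix.transpose_apply, hG] <;> try ring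
    · fin_cases c <;>
        simp [Matrix.fromBlocks, B1, B2, Matrix.transpose_apply, hG] <;> try ring
    · simp [Matrix.fromBlocks, B1, B2, Matrix.transpose_apply, hG]; try ring
  -- step 3 : row operations with pivot (inl 1)
  have s3 : (B3 d lam b).det = (B2 d lam b).det := by
    refine Matrix.det_eq_of_forall_row_eq_smul_add_const
      (Sum.elim ![0, 0] (fun _ => -1)) (Sum.inl 1) (by simp) ?_
    rintro (a | i) (c | j)
    · fin_cases a <;> fin_cases c <;> simp [Matrix.fromBlocks, B2, B3, hG] <;> try ring
    · fin_cases a <;> simp [Matrix.fromBlocks, B2, B3, hG] <;> try ring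
    · fin_cases c <;> simp [Matrix.fromBlocks, B2, B3, hG] <;> try ring
    · simp [Matrix.fromBlocks, B2, B3, hG]; try ring
  -- step 4 : column operations with pivot (inl 1)
  have s4 : (B4 d lam b).det = (B3 d lam b).det := by
    rw [← Matrix.det_transpose (B4 d lam b), ← Matrix.det_transpose (B3 d lam b)]
    refine Matrix.det_eq_of_forall_row_eq_smul_add_const
      (Sum.elim ![0, 0] (fun _ => -1)) (Sum.inl 1) (by simp) ?_
    rintro (a | i) (c | j)
    · fin_cases a <;> fin_cases c <;>
        simp [Matrix.fromBlocks, B3, B4, Matrix.transpose_apply, hG] <;> try ring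
    · fin_cases a <;> simp [Matrix.fromBlocks, B3, B4, Matrix.transpose_apply, Hm, hG] <;> try ring
    · fin_cases c <;> simp [Matrix.fromBlocks, B3, B4, Matrix.transpose_apply, Hm, hG] <;> try ring
    · simp [Matrix.fromBlocks, B3, B4, Matrix.transpose_apply, Hm, hG]; try ring
  -- step 5 : row operations with pivot (inl 0)
  have s5 : (B5 d lam b).det = (B4 d lam b).det := by
    refine Matrix.det_eq_of_forall_row_eq_smul_add_const
      (Sum.elim ![0, 2 * G 0 0] (fun i => 2 * G i.succ 0 - 2 * G 0 0)) (Sum.inl 0)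
      (by simp) ?_
    rintro (a | i) (c | j)
    · fin_cases a <;> fin_cases c <;> simp [Matrix.fromBlocks, B4, B5, hG] <;> try ring
    · fin_cases a <;> simp [Matrix.fromBlocks, B4, B5, hG] <;> try ring
    · fin_cases c <;> simp [Matrix.fromBlocks, B4, B5, hG] <;> try ring
    · simp [Matrix.fromBlocks, B4, B5, hG]; try ring
  -- step 6 : column operations with pivot (inl 0)
  have s6 : (B6 d lam b).det = (B5 d lam b).det := by
    rw [← Matrix.det_transpose (B6 d lam b), ← Matrix.det_transpose (B5 d lam b)]
    refine Matrix.det_eq_of_forall_row_eq_smul_add_const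
      (Sum.elim ![0, 0] (fun j => 2 * G 0 j.succ - 2 * G 0 0)) (Sum.inl 0) (by simp) ?_
    rintro (a | i) (c | j)
    · fin_cases a <;> fin_cases c <;>
        simp [Matrix.fromBlocks, B5, B6, Matrix.transpose_apply, hG] <;> try ring
    · fin_cases a <;> simp [Matrix.fromBlocks, B5, B6, Matrix.transpose_apply, hG] <;> try ring
    · fin_cases c <;> simp [Matrix.fromBlocks, B5, B6, Matrix.transpose_apply, hG] <;> try ring
    · simp [Matrix.fromBlocks, B5, B6, Matrix.transpose_apply, hG]; try ring
  -- compute det B6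
  have hB6 : (B6 d lam b).det = -1 * ((-2 : ℝ) ^ d * (Hm d lam b).det) := by
    rw [B6, Matrix.det_fromBlocks_zero₁₂, Matrix.det_smul]
    have h2x2 : (!![0, 1; 1, 0] : Matrix (Fin 2) (Fin 2) ℝ).det = -1 := by
      rw [Matrix.det_fin_two_of]; norm_num
    rw [h2x2, Fintype.card_fin]
  have hdetA : Abar.det = -1 * ((-2 : ℝ) ^ d * (Hm d lam b).det) := by
    rw [← hdet0, ← s1, ← s2, ← s3, ← s4, ← s5, ← s6, hB6]
  -- conclude
  have hHpos : 0 < (Hm d lam b).det := (Hm_posDef lam hlam b).det_pos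
  have hpow : ((-2 : ℝ)) ^ d = (-1) ^ d * 2 ^ d := by
    rw [← neg_one_mul, mul_pow]
  have hfin : (-1 : ℝ) ^ (d + 1) * Abar.det = 2 ^ d * (Hm d lam b).det := by
    rw [hdetA, hpow]
    have h3 : ((-1 : ℝ)) ^ (d + 1) * ((-1 : ℝ)) ^ (d + 1) = 1 := by
      rw [← pow_add]
      exact Even.neg_one_pow ⟨d + 1, by ring⟩
    linear_combination (2 ^ d * (Hm d lam b).det) * h3
  rw [hfin]
  positivity
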